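/- If a subgroup M of Sym({1,...,2k}) fixes the point 1 and acts transitively on the (k-1)-element subsets of {2,...,2k} (i.e., is (k-1)-homogeneous on a set of size 2k-1), and |M| = (1/2)·C(2k,k), then k ∈ {1,2,3}. -/

import Mathlib

open Finset

lemma card_supersets (Ω S : Finset ℕ) (hS : S ⊆ Ω) (m : ℕ) (hm : S.card ≤ m) :
    ((Ω.powersetCard m).filter (fun B => S ⊆ B)).card
      = (Ω.card - S.card).choose (m - S.card) := by
  rw [← Finset.card_sdiff_of_subset hS, ← Finset.card_powersetCard]
  apply Finset.card_nbij' (i := fun B => B \ S) (j := fun C => C ∪ S)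
  · intro B hB
    replace hB : B ∈ (Ω.powersetCard m).filter (fun B => S ⊆ B) := hB
    show B \ S ∈ (Ω \ S).powersetCard (m - S.card)
    simp only [mem_filter, Finset.mem_powersetCard] at hB ⊢
    obtain ⟨⟨hBΩ, hBc⟩, hSB⟩ := hB
    exact ⟨Finset.sdiff_subset_sdiff hBΩ le_rfl, by rw [Finset.card_sdiff_of_subset hSB, hBc]⟩
  · intro C hC
    replace hC : C ∈ (Ω \ S).powersetCard (m - S.card) := hC
    simp only [Finset.mem_powersetCard] at hC
    obtain ⟨hCs, hCc⟩ := hC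
    have hdisj : Disjoint C S := Finset.disjoint_of_subset_left hCs (Finset.sdiff_disjoint)
    show C ∪ S ∈ (Ω.powersetCard m).filter (fun B => S ⊆ B)
    simp only [mem_filter, Finset.mem_powersetCard]
    refine ⟨⟨Finset.union_subset (hCs.trans (Finset.sdiff_subset)) hS, ?_⟩, Finset.subset_union_right⟩
    rw [Finset.card_union_of_disjoint hdisj, hCc]
    omega
  · intro B hB
    replace hB : B ∈ (Ω.powersetCard m).filter (fun B => S ⊆ B) := hB
    simp only [mem_filter] at hB
    exact Finset.sdiff_union_of_subset hB.2
  · intro C hC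
    replace hC : C ∈ (Ω \ S).powersetCard (m - S.card) := hC
    simp only [Finset.mem_powersetCard] at hC
    have hdisj : Disjoint C S := Finset.disjoint_of_subset_left hC.1 (Finset.sdiff_disjoint)
    show (C ∪ S) \ S = C
    rw [Finset.union_sdiff_distrib, Finset.sdiff_self, Finset.union_empty,
      Finset.sdiff_eq_self_of_disjoint hdisj]

open Finset

lemma filter_subsets_eq (Ω X : Finset ℕ) (hX : X ⊆ Ω) (r : ℕ) :
    (Ω.powersetCard r).filter (fun C => C ⊆ X) = X.powersetCard r := by
  ext C
  simp only [mem_filter, Finset.mem_powersetCard]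
  exact ⟨fun h => ⟨h.2, h.1.2⟩, fun h => ⟨⟨h.1.trans hX, h.2⟩, h.1⟩⟩

lemma pair_count (Ω : Finset ℕ) (j : ℕ) (hj1 : 1 ≤ j) (hj : 2*j+1 ≤ Ω.card)
    (A A' : Finset ℕ) (hA : A ∈ Ω.powersetCard j) (hA' : A' ∈ Ω.powersetCard j) :
    ((Ω.powersetCard (j+1)).filter (fun B => A ⊆ B ∧ A' ⊆ B)).card
      = ((Ω.powersetCard (j-1)).filter (fun C => C ⊆ A ∧ C ⊆ A')).card
        + (if A = A' then Ω.card - 2*j else 0) := by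
  rw [Finset.mem_powersetCard] at hA hA'
  obtain ⟨hAΩ, hAc⟩ := hA
  obtain ⟨hA'Ω, hA'c⟩ := hA'
  rcases eq_or_ne A A' with rfl | hne
  · rw [if_pos rfl]
    have h1 : (Ω.powersetCard (j+1)).filter (fun B => A ⊆ B ∧ A ⊆ B)
        = (Ω.powersetCard (j+1)).filter (fun B => A ⊆ B) :=
      Finset.filter_congr (fun B _ => by simp)
    have h2 : (Ω.powersetCard (j-1)).filter (fun C => C ⊆ A ∧ C ⊆ A)
        = (Ω.powersetCard (j-1)).filter (fun C => C ⊆ A) :=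
      Finset.filter_congr (fun C _ => by simp)
    rw [h1, h2, card_supersets Ω A hAΩ (j+1) (by omega),
      filter_subsets_eq Ω A hAΩ (j-1), Finset.card_powersetCard, hAc]
    have e1 : Ω.card - j = Ω.card - 2*j + j := by omega
    have e2 : j + 1 - j = 1 := by omega
    have e3 : j - (j-1) = 1 := Nat.sub_sub_self hj1
    rw [e2, Nat.choose_one_right, ← Nat.choose_symm (Nat.sub_le j 1), e3,
      Nat.choose_one_right]
    omega
  · have hsub : A ⊆ A ∪ A' := Finset.subset_union_left
    have hU : j + 1 ≤ (A ∪ A').card := by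
      by_contra h
      push_neg at h
      have : A = A ∪ A' := Finset.eq_of_subset_of_card_le hsub (by omega)
      have : A' ⊆ A := this ▸ Finset.subset_union_right
      exact hne ((Finset.eq_of_subset_of_card_le this (by omega)).symm)
    have hIE : (A ∪ A').card + (A ∩ A').card = 2*j := by
      have := Finset.card_union_add_card_inter A A'
      omega
    rw [if_neg hne, Nat.add_zero]
    rcases eq_or_lt_of_le hU with hU1 | hU2
    · -- |A ∪ A'| = j+1
      have hfu : (Ω.powersetCard (j+1)).filter (fun B => A ⊆ B ∧ A' ⊆ B) = {A ∪ A'} := by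
        ext B
        simp only [mem_filter, Finset.mem_powersetCard, Finset.mem_singleton]
        constructor
        · rintro ⟨⟨hBΩ, hBc⟩, hAB, hA'B⟩
          exact (Finset.eq_of_subset_of_card_le (Finset.union_subset hAB hA'B) (by omega)).symm
        · rintro rfl
          exact ⟨⟨Finset.union_subset hAΩ hA'Ω, hU1.symm⟩, Finset.subset_union_left,
            Finset.subset_union_right⟩
      have h2 : (Ω.powersetCard (j-1)).filter (fun C => C ⊆ A ∧ C ⊆ A')
          = (Ω.powersetCard (j-1)).filter (fun C => C ⊆ A ∩ A') :=
        Finset.filter_congr (fun C _ => by simp [Finset.subset_inter_iff])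
      have hIc : (A ∩ A').card = j - 1 := by omega
      rw [hfu, h2, filter_subsets_eq Ω (A ∩ A')
          ((Finset.inter_subset_left).trans hAΩ) (j-1),
        Finset.card_powersetCard, hIc, Nat.choose_self, Finset.card_singleton]
    · -- |A ∪ A'| ≥ j+2
      have hfu : (Ω.powersetCard (j+1)).filter (fun B => A ⊆ B ∧ A' ⊆ B) = ∅ := by
        rw [Finset.filter_eq_empty_iff]
        rintro B hB ⟨hAB, hA'B⟩
        rw [Finset.mem_powersetCard] at hB
        have := Finset.card_le_card (Finset.union_subset hAB hA'B)
        omega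
      have hfd : (Ω.powersetCard (j-1)).filter (fun C => C ⊆ A ∧ C ⊆ A') = ∅ := by
        rw [Finset.filter_eq_empty_iff]
        rintro C hC ⟨hCA, hCA'⟩
        rw [Finset.mem_powersetCard] at hC
        have := Finset.card_le_card (Finset.subset_inter hCA hCA')
        omega
      rw [hfu, hfd]
      simp

open Finset

lemma sum_sq_expand (u s : Finset (Finset ℕ)) (p : Finset ℕ → Finset ℕ → Prop)
    [∀ A B : Finset ℕ, Decidable (p A B)] (f : Finset ℕ → ℚ) :
    ∑ X ∈ u, ((∑ A ∈ s.filter (fun A => p A X), f A) * (∑ A ∈ s.filter (fun A => p A X), f A))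
      = ∑ A ∈ s, ∑ A' ∈ s, (f A * f A') * ((u.filter (fun X => p A X ∧ p A' X)).card : ℚ) := by
  calc ∑ X ∈ u, ((∑ A ∈ s.filter (fun A => p A X), f A) * (∑ A ∈ s.filter (fun A => p A X), f A))
      = ∑ X ∈ u, ∑ A ∈ s, ∑ A' ∈ s, (if p A X ∧ p A' X then f A * f A' else 0) := by
        refine Finset.sum_congr rfl fun X _ => ?_
        rw [Finset.sum_filter, Finset.sum_mul_sum]
        refine Finset.sum_congr rfl fun A _ => Finset.sum_congr rfl fun A' _ => ?_
        by_cases h1 : p A X <;> by_cases h2 : p A' X <;> simp [h1, h2]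
    _ = ∑ A ∈ s, ∑ A' ∈ s, ∑ X ∈ u, (if p A X ∧ p A' X then f A * f A' else 0) := by
        rw [Finset.sum_comm]
        exact Finset.sum_congr rfl fun A _ => Finset.sum_comm
    _ = ∑ A ∈ s, ∑ A' ∈ s, (f A * f A') * ((u.filter (fun X => p A X ∧ p A' X)).card : ℚ) := by
        refine Finset.sum_congr rfl fun A _ => Finset.sum_congr rfl fun A' _ => ?_
        rw [← Finset.sum_filter, Finset.sum_const, nsmul_eq_mul, mul_comm]

open Finset

lemma keyU (Ω : Finset ℕ) (j : ℕ) (hj1 : 1 ≤ j) (hj : 2*j+1 ≤ Ω.card) (f : Finset ℕ → ℚ)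
    (hUf : ∀ B ∈ Ω.powersetCard (j+1),
      ∑ A ∈ (Ω.powersetCard j).filter (fun A => A ⊆ B), f A = 0) :
    ∀ A ∈ Ω.powersetCard j, f A = 0 := by
  set s := Ω.powersetCard j with hs
  have hup : (0:ℚ) = ∑ A ∈ s, ∑ A' ∈ s, (f A * f A') *
      (((Ω.powersetCard (j+1)).filter (fun X => A ⊆ X ∧ A' ⊆ X)).card : ℚ) := by
    rw [← sum_sq_expand (Ω.powersetCard (j+1)) s (fun A X => A ⊆ X) f]
    exact (Finset.sum_eq_zero fun B hB => by rw [hUf B hB, mul_zero]).symm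
  have hdown := sum_sq_expand (Ω.powersetCard (j-1)) s (fun A X => X ⊆ A) f
  have hsplit : ∀ A ∈ s, ∀ A' ∈ s,
      ((((Ω.powersetCard (j+1)).filter (fun X => A ⊆ X ∧ A' ⊆ X)).card : ℚ))
        = (((Ω.powersetCard (j-1)).filter (fun X => X ⊆ A ∧ X ⊆ A')).card : ℚ)
          + (if A = A' then ((Ω.card - 2*j : ℕ) : ℚ) else 0) := by
    intro A hA A' hA'
    rw [pair_count Ω j hj1 hj A A' hA hA']
    split_ifs <;> push_cast <;> ring
  have hmain : (0:ℚ) =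
      (∑ C ∈ Ω.powersetCard (j-1), ((∑ A ∈ s.filter (fun A => C ⊆ A), f A) *
        (∑ A ∈ s.filter (fun A => C ⊆ A), f A)))
      + ((Ω.card - 2*j : ℕ) : ℚ) * ∑ A ∈ s, f A * f A := by
    rw [hup, hdown]
    calc ∑ A ∈ s, ∑ A' ∈ s, (f A * f A') *
        (((Ω.powersetCard (j+1)).filter (fun X => A ⊆ X ∧ A' ⊆ X)).card : ℚ)
        = ∑ A ∈ s, ∑ A' ∈ s, ((f A * f A') *
            (((Ω.powersetCard (j-1)).filter (fun X => X ⊆ A ∧ X ⊆ A')).card : ℚ)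
          + (f A * f A') * (if A = A' then ((Ω.card - 2*j : ℕ) : ℚ) else 0)) := by
          refine Finset.sum_congr rfl fun A hA => Finset.sum_congr rfl fun A' hA' => ?_
          rw [hsplit A hA A' hA', mul_add]
      _ = (∑ A ∈ s, ∑ A' ∈ s, (f A * f A') *
            (((Ω.powersetCard (j-1)).filter (fun X => X ⊆ A ∧ X ⊆ A')).card : ℚ))
          + ∑ A ∈ s, ∑ A' ∈ s, (f A * f A') * (if A = A' then ((Ω.card - 2*j : ℕ) : ℚ) else 0) := by
          rw [← Finset.sum_add_distrib]
          exact Finset.sum_congr rfl fun A hA => Finset.sum_add_distrib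
      _ = (∑ A ∈ s, ∑ A' ∈ s, (f A * f A') *
            (((Ω.powersetCard (j-1)).filter (fun X => X ⊆ A ∧ X ⊆ A')).card : ℚ))
          + ((Ω.card - 2*j : ℕ) : ℚ) * ∑ A ∈ s, f A * f A := by
          congr 1
          rw [Finset.mul_sum]
          refine Finset.sum_congr rfl fun A hA => ?_
          have : ∀ A' ∈ s, (f A * f A') * (if A = A' then ((Ω.card - 2*j : ℕ) : ℚ) else 0)
              = if A = A' then (f A * f A' * ((Ω.card - 2*j : ℕ) : ℚ)) else 0 := by
            intro A' _; split_ifs <;> ring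
          rw [Finset.sum_congr rfl this, Finset.sum_ite_eq, if_pos hA]
          ring
  have hd1 : (1:ℚ) ≤ ((Ω.card - 2*j : ℕ) : ℚ) := by
    have : 1 ≤ Ω.card - 2*j := by omega
    exact_mod_cast this
  have hnn1 : (0:ℚ) ≤ ∑ C ∈ Ω.powersetCard (j-1), ((∑ A ∈ s.filter (fun A => C ⊆ A), f A) *
      (∑ A ∈ s.filter (fun A => C ⊆ A), f A)) :=
    Finset.sum_nonneg fun _ _ => mul_self_nonneg _
  have hnn2 : (0:ℚ) ≤ ∑ A ∈ s, f A * f A :=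
    Finset.sum_nonneg fun _ _ => mul_self_nonneg _
  have hzero : ∑ A ∈ s, f A * f A = 0 := by nlinarith
  intro A hA
  have := (Finset.sum_eq_zero_iff_of_nonneg (fun A _ => mul_self_nonneg (f A))).mp hzero A hA
  exact mul_self_eq_zero.mp this

open Finset Pointwise

/-- If a subgroup `M` of `Sym({1,...,2k})` fixes `1` and is `(k-1)`-homogeneous on
`{2,...,2k}` (acts transitively on its `(k-1)`-element subsets), and `|M| = (1/2)·C(2k,k)`,
then `k ∈ {1,2,3}`. -/
theorem stmt19 (k : ℕ) (M : Subgroup (Equiv.Perm ℕ))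
    (hsupp : ∀ σ ∈ M, ∀ x ∉ Finset.Icc 1 (2*k), σ x = x)
    (hfix : ∀ σ ∈ M, σ 1 = 1)
    (htrans : ∀ A B : Finset ℕ, A ⊆ Finset.Icc 2 (2*k) → B ⊆ Finset.Icc 2 (2*k) →
      A.card = k - 1 → B.card = k - 1 → ∃ σ ∈ M, A.image σ = B)
    (hcard : 2 * Nat.card ↥M = Nat.choose (2*k) k) :
    k = 1 ∨ k = 2 ∨ k = 3 := by
  classical
  -- dispose of small k
  by_cases hk4 : k ≤ 3
  · interval_cases k
    · exfalso; norm_num at hcard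
    · exact Or.inl rfl
    · exact Or.inr (Or.inl rfl)
    · exact Or.inr (Or.inr rfl)
  · exfalso
    push_neg at hk4
    obtain ⟨m, rfl⟩ : ∃ m, k = m + 4 := ⟨k - 4, by omega⟩
    set Ω : Finset ℕ := Finset.Icc 2 (2*(m+4)) with hΩdef
    have hΩ : Ω.card = 2*m+7 := by rw [hΩdef, Nat.card_Icc]; omega
    set s : Finset (Finset ℕ) := Ω.powersetCard (m+2) with hsdef
    set t : Finset (Finset ℕ) := Ω.powersetCard (m+3) with htdef
    -- elements of M map Ω into Ω
    have hmaps : ∀ σ ∈ M, ∀ x ∈ Ω, σ x ∈ Ω := by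
      intro σ hσ x hx
      rw [hΩdef, Finset.mem_Icc] at hx
      have hxI : σ x ∈ Finset.Icc 1 (2*(m+4)) := by
        by_contra h
        have h2 := hsupp σ hσ (σ x) h
        have := σ.injective h2
        rw [this] at h
        exact h (Finset.mem_Icc.mpr (by omega))
      rw [Finset.mem_Icc] at hxI
      have h1 : σ x ≠ 1 := by
        intro he
        have := σ.injective (he.trans (hfix σ hσ).symm)
        omega
      rw [hΩdef, Finset.mem_Icc]
      omega
    have himgsub : ∀ σ ∈ M, ∀ A : Finset ℕ, A ⊆ Ω → A.image σ ⊆ Ω := by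
      intro σ hσ A hA x hx
      obtain ⟨y, hy, rfl⟩ := Finset.mem_image.mp hx
      exact hmaps σ hσ y (hA hy)
    have himgcard : ∀ (σ : Equiv.Perm ℕ) (A : Finset ℕ), (A.image σ).card = A.card :=
      fun σ A => Finset.card_image_of_injective A σ.injective
    have himg_inv : ∀ (σ : Equiv.Perm ℕ) (A : Finset ℕ), (A.image ⇑σ).image ⇑(σ⁻¹) = A := by
      intro σ A
      rw [Finset.image_image]
      have h : (⇑(σ⁻¹) ∘ ⇑σ) = id := by funext x; simp
      rw [h, Finset.image_id]
    -- the orbit relation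
    set R : Finset ℕ → Finset ℕ → Prop := fun A B => ∃ σ ∈ M, A.image σ = B with hRdef
    have hRrefl : ∀ A, R A A := fun A => ⟨1, M.one_mem, by simp⟩
    have hRsymm : ∀ A B, R A B → R B A := by
      rintro A B ⟨σ, hσ, rfl⟩
      exact ⟨σ⁻¹, M.inv_mem hσ, himg_inv σ A⟩
    have hRiff : ∀ C (σ : Equiv.Perm ℕ), σ ∈ M → ∀ A, (R C (A.image σ) ↔ R C A) := by
      intro C σ hσ A
      constructor
      · rintro ⟨τ, hτ, hτeq⟩
        refine ⟨σ⁻¹ * τ, M.mul_mem (M.inv_mem hσ) hτ, ?_⟩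
        rw [Equiv.Perm.coe_mul, ← Finset.image_image, hτeq, himg_inv]
      · rintro ⟨τ, hτ, rfl⟩
        refine ⟨σ * τ, M.mul_mem hσ hτ, ?_⟩
        rw [Equiv.Perm.coe_mul, ← Finset.image_image]
    -- Step A : M has a single orbit on (m+2)-subsets of Ω
    have horb : ∀ B₀ ∈ s, ∀ A ∈ s, R B₀ A := by
      by_contra hcon
      push_neg at hcon
      obtain ⟨B₀, hB₀, B₁, hB₁, hnR⟩ := hcon
      set a : ℕ := (s.filter (fun A => R B₀ A)).card with hadef
      set b : ℕ := (s.filter (fun A => R B₁ A)).card with hbdef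
      have ha : 0 < a := Finset.card_pos.mpr ⟨B₀, Finset.mem_filter.mpr ⟨hB₀, hRrefl B₀⟩⟩
      have hb : 0 < b := Finset.card_pos.mpr ⟨B₁, Finset.mem_filter.mpr ⟨hB₁, hRrefl B₁⟩⟩
      set f : Finset ℕ → ℚ := fun A =>
        (if R B₀ A then (a:ℚ)⁻¹ else 0) - (if R B₁ A then (b:ℚ)⁻¹ else 0) with hfdef
      have hInv : ∀ σ ∈ M, ∀ A, f (A.image σ) = f A := by
        intro σ hσ A
        rw [hfdef]
        simp only [hRiff B₀ σ hσ A, hRiff B₁ σ hσ A]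
      -- reindexing sums over subsets of B
      have hreindex : ∀ σ ∈ M, ∀ B : Finset ℕ, B ⊆ Ω →
          ∑ A ∈ s.filter (fun A => A ⊆ B.image σ), f A
            = ∑ A ∈ s.filter (fun A => A ⊆ B), f A := by
        intro σ hσ B hB
        have hback : ∀ A : Finset ℕ, (A.image ⇑(σ⁻¹)).image ⇑σ = A := by
          intro A
          rw [Finset.image_image]
          have h : (⇑σ ∘ ⇑(σ⁻¹)) = id := by funext x; simp
          rw [h, Finset.image_id]
        refine Finset.sum_nbij' (i := fun A => A.image ⇑(σ⁻¹)) (j := fun A => A.image ⇑σ)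
          ?_ ?_ ?_ ?_ ?_
        · intro A hA
          simp only [Finset.mem_filter, hsdef, Finset.mem_powersetCard] at hA ⊢
          obtain ⟨⟨hAΩ, hAc⟩, hAB⟩ := hA
          have h1 : A.image ⇑(σ⁻¹) ⊆ B := by
            intro x hx
            obtain ⟨y, hy, rfl⟩ := Finset.mem_image.mp hx
            have hmem := hAB hy
            obtain ⟨z, hz, rfl⟩ := Finset.mem_image.mp hmem
            simpa using hz
          exact ⟨⟨h1.trans hB, by rw [himgcard, hAc]⟩, h1⟩
        · intro A hA
          simp only [Finset.mem_filter, hsdef, Finset.mem_powersetCard] at hA ⊢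
          obtain ⟨⟨hAΩ, hAc⟩, hAB⟩ := hA
          exact ⟨⟨himgsub σ hσ A hAΩ, by rw [himgcard, hAc]⟩, Finset.image_subset_image hAB⟩
        · intro A _
          exact hback A
        · intro A _
          exact himg_inv σ A
        · intro A _
          have h2 : f (A.image ⇑(σ⁻¹)) = f ((A.image ⇑(σ⁻¹)).image ⇑σ) := (hInv σ hσ _).symm
          rw [h2, hback A]
      -- Uf is constant on t
      have htne : t.Nonempty := by
        rw [← Finset.card_pos, htdef, Finset.card_powersetCard, hΩ]
        exact Nat.choose_pos (by omega)
      obtain ⟨B₂, hB₂⟩ := htne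
      set c : ℚ := ∑ A ∈ s.filter (fun A => A ⊆ B₂), f A with hcdef
      have hconst : ∀ B ∈ t, ∑ A ∈ s.filter (fun A => A ⊆ B), f A = c := by
        intro B hB
        rw [htdef, Finset.mem_powersetCard] at hB hB₂
        obtain ⟨σ, hσ, hσeq⟩ := htrans B₂ B hB₂.1 hB.1
          (by rw [hB₂.2]; omega) (by rw [hB.2]; omega)
        rw [hcdef, ← hσeq, hreindex σ hσ B₂ hB₂.1]
      -- total sum computation
      have hsumf : ∑ A ∈ s, f A = 0 := by
        rw [hfdef]
        rw [Finset.sum_sub_distrib, ← Finset.sum_filter, ← Finset.sum_filter,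
          Finset.sum_const, Finset.sum_const, ← hadef, ← hbdef, nsmul_eq_mul, nsmul_eq_mul,
          mul_inv_cancel₀ (by exact_mod_cast ha.ne'),
          mul_inv_cancel₀ (by exact_mod_cast hb.ne'), sub_self]
      have htotal : (t.card : ℚ) * c = 0 := by
        have h1 : ∑ B ∈ t, ∑ A ∈ s.filter (fun A => A ⊆ B), f A = (t.card : ℚ) * c := by
          rw [Finset.sum_congr rfl hconst, Finset.sum_const, nsmul_eq_mul]
        have h2 : ∑ B ∈ t, ∑ A ∈ s.filter (fun A => A ⊆ B), f A
            = ∑ A ∈ s, ((m+5 : ℕ) : ℚ) * f A := by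
          calc ∑ B ∈ t, ∑ A ∈ s.filter (fun A => A ⊆ B), f A
              = ∑ B ∈ t, ∑ A ∈ s, if A ⊆ B then f A else 0 := by
                exact Finset.sum_congr rfl fun B _ => Finset.sum_filter _ _
            _ = ∑ A ∈ s, ∑ B ∈ t, if A ⊆ B then f A else 0 := Finset.sum_comm
            _ = ∑ A ∈ s, ((m+5 : ℕ) : ℚ) * f A := by
                refine Finset.sum_congr rfl fun A hA => ?_
                rw [← Finset.sum_filter, Finset.sum_const, nsmul_eq_mul]
                congr 1
                rw [hsdef, Finset.mem_powersetCard] at hA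
                rw [htdef, card_supersets Ω A hA.1 (m+3) (by rw [hA.2]; omega), hΩ, hA.2,
                  show 2*m+7 - (m+2) = m+5 by omega, show m+3 - (m+2) = 1 by omega,
                  Nat.choose_one_right]
          
        rw [← h1, h2, ← Finset.mul_sum, hsumf, mul_zero]
      have hcd : c = 0 := by
        have htc : (t.card : ℚ) ≠ 0 := by
          rw [htdef, Finset.card_powersetCard, hΩ]
          exact_mod_cast (Nat.choose_pos (show m+3 ≤ 2*m+7 by omega)).ne'
        exact (mul_eq_zero.mp htotal).resolve_left htc
      -- apply injectivity
      have hfB₀ : f B₀ = 0 := by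
        refine keyU Ω (m+2) (by omega) (by omega) f ?_ B₀ hB₀
        intro B hB
        rw [hconst B hB, hcd]
      rw [hfdef] at hfB₀
      simp only [if_pos (hRrefl B₀)] at hfB₀
      have hR10 : ¬ R B₁ B₀ := fun h => hnR (hRsymm _ _ h)
      rw [if_neg hR10, sub_zero] at hfB₀
      exact (by exact_mod_cast ha.ne' : ((a:ℚ) ≠ 0)) (inv_eq_zero.mp hfB₀)
    -- Step B : orbit-stabilizer gives divisibility
    have hNpos : 0 < Nat.card ↥M := by
      have := Nat.choose_pos (show m+4 ≤ 2*(m+4) by omega)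
      omega
    have hfin : Finite ↥M := (Nat.card_pos_iff.mp hNpos).2
    have hsne : s.Nonempty := by
      rw [← Finset.card_pos, hsdef, Finset.card_powersetCard, hΩ]
      exact Nat.choose_pos (by omega)
    obtain ⟨B₀, hB₀⟩ := hsne
    have horbit_eq : MulAction.orbit (↥M) B₀ = (↑s : Set (Finset ℕ)) := by
      ext A
      constructor
      · rintro ⟨⟨σ, hσ⟩, rfl⟩
        rw [hsdef, Finset.mem_powersetCard] at hB₀
        have hmem : B₀.image ⇑σ ∈ s := by
          rw [hsdef, Finset.mem_powersetCard]
          exact ⟨himgsub σ hσ B₀ hB₀.1, by rw [himgcard, hB₀.2]⟩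
        exact Finset.mem_coe.mpr hmem
      · intro hA
        obtain ⟨σ, hσ, hσeq⟩ := horb B₀ hB₀ A hA
        exact ⟨⟨σ, hσ⟩, hσeq⟩
    have hdvd : s.card ∣ Nat.card ↥M := by
      have h1 := MulAction.index_stabilizer (↥M) B₀
      have h2 : (MulAction.stabilizer (↥M) B₀).index ∣ Nat.card ↥M :=
        Subgroup.index_dvd_card _
      rw [h1, horbit_eq, Set.ncard_coe_finset] at h2
      exact h2
    -- compute the two cardinalities
    have hscard : s.card = Nat.choose (2*m+7) (m+2) := by
      rw [hsdef, Finset.card_powersetCard, hΩ]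
    have hN : Nat.card ↥M = Nat.choose (2*m+7) (m+3) := by
      have e1 : 2*(m+4) = (2*m+7) + 1 := by omega
      have e2 : m + 4 = (m+3) + 1 := by omega
      have e3 : (2*m+7).choose ((m+3)+1) = (2*m+7).choose (m+3) := by
        have e4 : (2*m+7) - ((m+3)+1) = m+3 := by omega
        rw [← Nat.choose_symm (show (m+3)+1 ≤ 2*m+7 by omega), e4]
      rw [e1, e2, Nat.choose_succ_succ, e3] at hcard
      omega
    -- final arithmetic
    obtain ⟨u, hu⟩ : Nat.choose (2*m+7) (m+2) ∣ Nat.choose (2*m+7) (m+3) := by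
      rw [← hscard, ← hN]; exact hdvd
    have hrel : Nat.choose (2*m+7) (m+3) * (m+3) = Nat.choose (2*m+7) (m+2) * (m+5) := by
      have := Nat.choose_succ_right_eq (2*m+7) (m+2)
      have e : 2*m+7 - (m+2) = m+5 := by omega
      rw [e] at this
      exact this
    have hC2pos : 0 < Nat.choose (2*m+7) (m+2) := Nat.choose_pos (by omega)
    rw [hu, mul_assoc] at hrel
    have humul : u * (m+3) = m+5 := Nat.eq_of_mul_eq_mul_left hC2pos hrel
    rcases u with _ | _ | u
    · omega
    · omega
    · have h2 : 2*(m+3) ≤ (u+1+1)*(m+3) := Nat.mul_le_mul_right _ (by omega)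
      omega
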